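/- Let P be a finite graded Eulerian poset with 0̂ and 1̂, and let (x,y,z) be a proper zipper in P. Then the zipped poset P' is Eulerian. -/

import Mathlib

/-- The underlying set of the zipped poset `P' = (P − {x,y,z}) ∪ {xy}`:
elements of `P` other than `x`, `y`, `z`, together with one new element `xy`
(represented by `Sum.inr ()`). -/
def ZipCarrier (α : Type*) (x y z : α) : Type _ :=
  {p : α // p ≠ x ∧ p ≠ y ∧ p ≠ z} ⊕ Unit

/-- The order relation `⪯` on the zipped poset: `a ⪯ b` if `a ≤ b` in `P`;
`xy ⪯ a` if `x ≤ a` or `y ≤ a`; `a ⪯ xy` if `a ≤ x`; and `xy ⪯ xy`. -/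
def zipLE {α : Type*} [PartialOrder α] (x y z : α) :
    ZipCarrier α x y z → ZipCarrier α x y z → Prop
  | .inl a, .inl b => a.val ≤ b.val
  | .inr _, .inl b => x ≤ b.val ∨ y ≤ b.val
  | .inl a, .inr _ => a.val ≤ x
  | .inr _, .inr _ => True

/-- `(x,y,z)` is a zipper in `P`: `z` covers `x` and `y` and covers no other element,
`z = x ∨ y` (the join), and the sets of elements strictly below `x` and `y` agree. -/
def IsZipper {α : Type*} [PartialOrder α] (x y z : α) : Prop :=
  x ≠ y ∧ x ≠ z ∧ y ≠ z ∧
  (x ⋖ z) ∧ (y ⋖ z) ∧ (∀ w : α, w ⋖ z → w = x ∨ w = y) ∧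
  IsLUB {x, y} z ∧
  (∀ a : α, a < x ↔ a < y)

open scoped Classical in
/-- `μ` is the Möbius function of the relation `r`:
`∑_{c : r a c ∧ r c b} μ(a,c) = δ_{a,b}` for all `a ≤ b`. -/
noncomputable def IsMoebius {α : Type*} (r : α → α → Prop) (μ : α → α → ℤ) : Prop :=
  ∀ a b : α, r a b →
    (∑ᶠ c ∈ {c : α | r a c ∧ r c b}, μ a c) = if a = b then 1 else 0

/-- The rank function of the zipped poset: old elements keep their rank, and
the new element `xy` has the common rank of `x` and `y`. -/
def zipRank {α : Type*} (x y z : α) (rk : α → ℕ) : ZipCarrier α x y z → ℕ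
  | .inl a => rk a.val
  | .inr _ => rk x

section ZipAux

lemma zip_neg_one_pow_sub {m n : ℕ} (h : m ≤ n) :
    ((-1 : ℤ)) ^ (n - m) = (-1 : ℤ) ^ n * (-1 : ℤ) ^ m := by
  obtain ⟨k, rfl⟩ := Nat.exists_eq_add_of_le h
  rw [Nat.add_sub_cancel_left, pow_add, mul_comm ((-1:ℤ)^m), mul_assoc, ← pow_add]
  simp [Even.neg_one_pow ⟨m, rfl⟩]

lemma zip_neg_one_pow_sq (n : ℕ) : ((-1 : ℤ)) ^ n * (-1 : ℤ) ^ n = 1 := by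
  rw [← pow_add]; exact Even.neg_one_pow ⟨n, rfl⟩

lemma zip_rk_strictMono {α : Type*} [PartialOrder α] [Finite α] (rk : α → ℕ)
    (hrkcov : ∀ a b : α, a ⋖ b → rk b = rk a + 1) {a b : α} (hab : a < b) :
    rk a < rk b := by
  classical
  have _i := Fintype.ofFinite α
  letI := Fintype.toLocallyFiniteOrder (α := α)
  have H : ∀ n (a b : α), (Finset.Icc a b).card ≤ n → a < b → rk a < rk b := by
    intro n
    induction n with
    | zero =>
      intro a b hc hab
      have : a ∈ Finset.Icc a b := by simp [hab.le]
      have := Finset.card_pos.2 ⟨a, this⟩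
      omega
    | succ n ih =>
      intro a b hc hab
      obtain ⟨c, hac, hcb⟩ := hab.exists_covby_le
      have h1 : rk a < rk c := by rw [hrkcov a c hac]; omega
      rcases eq_or_lt_of_le hcb with rfl | hcb'
      · exact h1
      · refine h1.trans (ih c b ?_ hcb')
        have hsub : Finset.Icc c b ⊆ (Finset.Icc a b).erase a := by
          intro d hd
          rw [Finset.mem_Icc] at hd
          rw [Finset.mem_erase, Finset.mem_Icc]
          refine ⟨?_, (hac.lt.le.trans hd.1), hd.2⟩
          rintro rfl
          exact absurd hd.1 (fun h => lt_irrefl _ (lt_of_lt_of_le hac.lt h))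
        have := Finset.card_le_card hsub
        have hmem : a ∈ Finset.Icc a b := by simp [hab.le]
        have := Finset.card_erase_of_mem hmem
        have := Finset.card_pos.2 ⟨a, hmem⟩
        omega
  exact H (Finset.Icc a b).card a b le_rfl hab

lemma zip_rk_mono {α : Type*} [PartialOrder α] [Finite α] (rk : α → ℕ)
    (hrkcov : ∀ a b : α, a ⋖ b → rk b = rk a + 1) {a b : α} (hab : a ≤ b) :
    rk a ≤ rk b := by
  rcases eq_or_lt_of_le hab with rfl | h
  · exact le_rfl
  · exact (zip_rk_strictMono rk hrkcov h).le

lemma zip_exists_le_covby {α : Type*} [PartialOrder α] [Finite α] {w z : α} (h : w < z) :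
    ∃ u, w ≤ u ∧ u ⋖ z := by
  classical
  have _i := Fintype.ofFinite α
  letI := Fintype.toLocallyFiniteOrder (α := α)
  exact h.exists_le_covby

lemma moebius_unique {β : Type*} [Finite β] (r : β → β → Prop)
    (hrefl : ∀ a, r a a) (htrans : ∀ {a b c}, r a b → r b c → r a c)
    (hanti : ∀ {a b}, r a b → r b a → a = b)
    {μ ν : β → β → ℤ} (hμ : IsMoebius r μ) (hν : IsMoebius r ν) :
    ∀ a b, r a b → μ a b = ν a b := by
  classical
  have _i := Fintype.ofFinite β
  intro a
  have key : ∀ n (b : β), (Finset.univ.filter fun c => r a c ∧ r c b).card ≤ n →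
      r a b → μ a b = ν a b := by
    intro n
    induction n with
    | zero =>
      intro b hc hab
      have hbmem : b ∈ Finset.univ.filter fun c => r a c ∧ r c b := by
        simp [hab, hrefl b]
      have := Finset.card_pos.2 ⟨b, hbmem⟩
      omega
    | succ n ih =>
      intro b hc hab
      set I := Finset.univ.filter fun c => r a c ∧ r c b with hI
      have hbmem : b ∈ I := by simp [hI, hab, hrefl b]
      have hset : {c : β | r a c ∧ r c b} = (↑I : Set β) := by ext c; simp [hI]
      have hμab := hμ a b hab
      have hνab := hν a b hab
      rw [hset, finsum_mem_coe_finset, ← Finset.add_sum_erase _ _ hbmem] at hμab hνab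
      have heq : ∑ c ∈ I.erase b, μ a c = ∑ c ∈ I.erase b, ν a c := by
        refine Finset.sum_congr rfl fun c hcmem => ?_
        rw [Finset.mem_erase, hI, Finset.mem_filter] at hcmem
        obtain ⟨hcb, -, hac, hcb'⟩ := hcmem
        refine ih c ?_ hac
        have hsub : (Finset.univ.filter fun d => r a d ∧ r d c) ⊆ I.erase b := by
          intro d hd
          rw [Finset.mem_filter] at hd
          rw [Finset.mem_erase, hI, Finset.mem_filter]
          refine ⟨?_, Finset.mem_univ d, hd.2.1, htrans hd.2.2 hcb'⟩
          rintro rfl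
          exact hcb (hanti hcb' hd.2.2)
        have := Finset.card_le_card hsub
        have := Finset.card_erase_of_mem hbmem
        have := Finset.card_pos.2 ⟨b, hbmem⟩
        omega
      omega
  intro b hab
  exact key _ b le_rfl hab

lemma zip_finsum_mem_mul_const {β : Type*} [Finite β] (s : Set β) (f : β → ℤ) (k : ℤ) :
    (∑ᶠ c ∈ s, f c * k) = (∑ᶠ c ∈ s, f c) * k := by
  classical
  have _i := Fintype.ofFinite β
  rw [finsum_mem_eq_finite_toFinset_sum _ s.toFinite,
    finsum_mem_eq_finite_toFinset_sum _ s.toFinite, Finset.sum_mul]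

lemma zip_finsum_mem_diff {β : Type*} [Finite β] (s t : Set β) (f : β → ℤ) :
    (∑ᶠ c ∈ s \ t, f c) = (∑ᶠ c ∈ s, f c) - (∑ᶠ c ∈ s ∩ t, f c) := by
  have := finsum_mem_union (f := f) Set.disjoint_sdiff_inter (s \ t).toFinite (s ∩ t).toFinite
  rw [Set.diff_union_inter] at this
  omega

lemma zip_finsum_mem_triple {β : Type*} [Finite β] {x y z : β}
    (hxy : x ≠ y) (hxz : x ≠ z) (hyz : y ≠ z) (f : β → ℤ) :
    (∑ᶠ c ∈ ({x, y, z} : Set β), f c) = f x + f y + f z := by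
  rw [finsum_mem_insert _ (by simp [hxy, hxz]) (Set.toFinite _),
    finsum_mem_insert _ (by simp [hyz]) (Set.toFinite _), finsum_mem_singleton]
  ring

instance zipCarrier_finite {α : Type*} [Finite α] (x y z : α) :
    Finite (ZipCarrier α x y z) := by
  unfold ZipCarrier; infer_instance

def zipEmb {α : Type*} (x y z : α) : ZipCarrier α x y z → α
  | .inl a => a.val
  | .inr _ => x

lemma zipEmb_injective {α : Type*} (x y z : α) : Function.Injective (zipEmb x y z) := by
  rintro (a | u) (b | v) h
  · exact congrArg Sum.inl (Subtype.ext h)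
  · exact absurd h a.2.1
  · exact absurd h.symm b.2.1
  · cases u; cases v; rfl

lemma zipRank_eq_rk_emb {α : Type*} (x y z : α) (rk : α → ℕ) (C : ZipCarrier α x y z) :
    zipRank x y z rk C = rk (zipEmb x y z C) := by
  rcases C with a | u <;> rfl

end ZipAux

/-- zipping a proper zipper in a finite graded Eulerian poset with
`0̂` and `1̂` yields an Eulerian poset. -/
theorem zipped_eulerian {α : Type*} [PartialOrder α] [BoundedOrder α] [Finite α]
    (rk : α → ℕ) (hrk0 : rk (⊥ : α) = 0)
    (hrkcov : ∀ a b : α, a ⋖ b → rk b = rk a + 1)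
    (x y z : α) (hzip : IsZipper x y z) (hproper : z ≠ ⊤)
    (μP : α → α → ℤ) (hμP : IsMoebius (· ≤ · : α → α → Prop) μP)
    (hEulerian : ∀ a b : α, a ≤ b → μP a b = (-1 : ℤ) ^ (rk b - rk a))
    (μ' : ZipCarrier α x y z → ZipCarrier α x y z → ℤ)
    (hμ' : IsMoebius (zipLE x y z) μ') :
    ∀ A B : ZipCarrier α x y z, zipLE x y z A B →
      μ' A B = (-1 : ℤ) ^ (zipRank x y z rk B - zipRank x y z rk A) := by
  classical
  obtain ⟨hxy, hxz, hyz, hxcov, hycov, hcovonly, hlub, hbelow⟩ := hzip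
  set r := zipLE x y z with hr
  set zr := zipRank x y z rk with hzrdef
  -- basic facts about the zipper
  have hrky : rk y = rk x := by
    have h1 := hrkcov x z hxcov; have h2 := hrkcov y z hycov; omega
  have hrkz : rk z = rk x + 1 := hrkcov x z hxcov
  have hxley : ¬ x ≤ y := fun h =>
    absurd ((hbelow x).2 (lt_of_le_of_ne h hxy)) (lt_irrefl x)
  have hylex : ¬ y ≤ x := fun h =>
    absurd ((hbelow y).1 (lt_of_le_of_ne h (Ne.symm hxy))) (lt_irrefl y)
  have hzleb : ∀ b : α, z ≤ b ↔ x ≤ b ∧ y ≤ b := by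
    intro b
    constructor
    · intro h; exact ⟨hxcov.le.trans h, hycov.le.trans h⟩
    · rintro ⟨h1, h2⟩
      refine hlub.2 ?_
      intro w hw
      rcases hw with rfl | hw
      · exact h1
      · rw [Set.mem_singleton_iff] at hw; subst hw; exact h2
  have hltz : ∀ w, w < z → w ≤ x ∨ w ≤ y := by
    intro w hw
    obtain ⟨u, hwu, hu⟩ := zip_exists_le_covby hw
    rcases hcovonly u hu with rfl | rfl
    · exact Or.inl hwu
    · exact Or.inr hwu
  have hlexy : ∀ {a : α}, a ≠ x → a ≤ x → a ≤ y :=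
    fun hax h => ((hbelow _).1 (lt_of_le_of_ne h hax)).le
  have hleyx : ∀ {a : α}, a ≠ y → a ≤ y → a ≤ x :=
    fun hay h => ((hbelow _).2 (lt_of_le_of_ne h hay)).le
  have hlez : ∀ {a : α}, a ≠ x → a ≠ y → a ≠ z → a ≤ z → a ≤ x := by
    intro a hax hay haz h
    rcases hltz a (lt_of_le_of_ne h haz) with h' | h'
    · exact h'
    · exact hleyx hay h'
  -- order axioms for the zipped relation
  have hrefl : ∀ A, r A A := by
    rintro (a | u)
    · exact le_refl a.val
    · trivial
  have htrans : ∀ {A B C}, r A B → r B C → r A C := by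
    rintro (a | u) (b | v) (c | w) hab hbc
    · exact le_trans hab hbc
    · exact le_trans hab hbc
    · rcases hbc with h | h
      · exact le_trans hab h
      · exact le_trans (hlexy a.2.1 hab) h
    · exact hab
    · exact hab.imp (fun h => h.trans hbc) (fun h => h.trans hbc)
    · trivial
    · exact hbc
    · trivial
  have hanti : ∀ {A B}, r A B → r B A → A = B := by
    rintro (a | u) (b | v) hab hba
    · exact congrArg Sum.inl (Subtype.ext (le_antisymm hab hba))
    · exfalso
      rcases hba with h | h
      · exact a.2.1 (le_antisymm hab h)
      · exact hylex (h.trans hab)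
    · exfalso
      rcases hab with h | h
      · exact b.2.1 (le_antisymm hba h)
      · exact hylex (h.trans hba)
    · cases u; cases v; rfl
  -- the unsigned Eulerian sum in P
  have Esum : ∀ a b : α, a ≤ b →
      (∑ᶠ c ∈ {c : α | a ≤ c ∧ c ≤ b}, ((-1:ℤ)) ^ (rk c))
        = if a = b then ((-1:ℤ)) ^ (rk a) else 0 := by
    intro a b hab
    have h0 : (∑ᶠ c ∈ {c : α | a ≤ c ∧ c ≤ b}, μP a c) = if a = b then 1 else 0 :=
      hμP a b hab
    have h1 : (∑ᶠ c ∈ {c : α | a ≤ c ∧ c ≤ b}, ((-1:ℤ))^(rk c) * ((-1:ℤ))^(rk a))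
        = if a = b then 1 else 0 := by
      rw [← h0]
      refine finsum_mem_congr rfl fun c hc => ?_
      obtain ⟨hac, hcb⟩ := hc
      rw [hEulerian a c hac, zip_neg_one_pow_sub (zip_rk_mono rk hrkcov hac)]
    rw [zip_finsum_mem_mul_const] at h1
    have h2 := congrArg (· * ((-1:ℤ))^(rk a)) h1
    rw [mul_assoc, zip_neg_one_pow_sq, mul_one] at h2
    rw [h2]
    split_ifs <;> ring
  -- the key unsigned computation in the zipped poset
  have key : ∀ A B, r A B →
      (∑ᶠ C ∈ {C | r A C ∧ r C B}, ((-1:ℤ))^(zr C))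
        = if A = B then ((-1:ℤ))^(zr A) else 0 := by
    intro A B hAB
    have himg : (∑ᶠ C ∈ {C | r A C ∧ r C B}, ((-1:ℤ))^(zr C))
        = ∑ᶠ c ∈ (zipEmb x y z '' {C | r A C ∧ r C B}), ((-1:ℤ))^(rk c) := by
      rw [finsum_mem_image ((zipEmb_injective x y z).injOn)]
      exact finsum_mem_congr rfl fun C _ => by rw [hzrdef, zipRank_eq_rk_emb]
    rw [himg]
    rcases A with a | u
    · rcases B with b | v
      · -- inl / inl
        have hab : a.val ≤ b.val := hAB
        by_cases hcond : a.val ≤ x ∧ (x ≤ b.val ∨ y ≤ b.val)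
        · obtain ⟨hax, hor⟩ := hcond
          have hay : a.val ≤ y := hlexy a.2.1 hax
          have hane : a.val ≠ b.val := by
            rintro h
            rcases hor with h' | h'
            · exact a.2.1 (le_antisymm hax (h'.trans h.symm.le))
            · exact a.2.2.1 (le_antisymm hay (h'.trans h.symm.le))
          have hABne : (Sum.inl a : ZipCarrier α x y z) ≠ Sum.inl b :=
            fun h => hane (congrArg (zipEmb x y z) h)
          have himage : zipEmb x y z '' {C | r (Sum.inl a) C ∧ r C (Sum.inl b)}
              = ({c : α | a.val ≤ c ∧ c ≤ b.val} \ {x, y, z}) ∪ {x} := by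
            ext c
            constructor
            · rintro ⟨(d | w), ⟨h1, h2⟩, rfl⟩
              · refine Or.inl ⟨⟨h1, h2⟩, ?_⟩
                rintro (h | h | h)
                · exact d.2.1 h
                · exact d.2.2.1 h
                · exact d.2.2.2 h
              · exact Or.inr rfl
            · rintro (⟨⟨h1, h2⟩, hne⟩ | hc)
              · refine ⟨Sum.inl ⟨c, ?_, ?_, ?_⟩, ⟨h1, h2⟩, rfl⟩
                · exact fun h => hne (Or.inl h)
                · exact fun h => hne (Or.inr (Or.inl h))
                · exact fun h => hne (Or.inr (Or.inr h))
              · rw [Set.mem_singleton_iff] at hc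
                subst hc
                exact ⟨Sum.inr (), ⟨hax, hor⟩, rfl⟩
          rw [himage]
          have hdisj : Disjoint ({c : α | a.val ≤ c ∧ c ≤ b.val} \ {x, y, z}) ({x} : Set α) :=
            Set.disjoint_singleton_right.2 (fun h => h.2 (Or.inl rfl))
          rw [finsum_mem_union hdisj (Set.toFinite _) (Set.toFinite _),
            finsum_mem_singleton, zip_finsum_mem_diff, Esum a.val b.val hab, if_neg hane]
          erw [if_neg hABne]
          by_cases hxb : x ≤ b.val
          · by_cases hyb : y ≤ b.val
            · have hint : {c : α | a.val ≤ c ∧ c ≤ b.val} ∩ {x, y, z} = {x, y, z} := by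
                refine Set.inter_eq_right.2 ?_
                rintro c (rfl | rfl | rfl)
                · exact ⟨hax, hxb⟩
                · exact ⟨hay, hyb⟩
                · exact ⟨hax.trans hxcov.le, (hzleb b.val).2 ⟨hxb, hyb⟩⟩
              rw [hint, zip_finsum_mem_triple hxy hxz hyz, hrky, hrkz, pow_succ]
              ring
            · have hint : {c : α | a.val ≤ c ∧ c ≤ b.val} ∩ {x, y, z} = {x} := by
                ext c
                constructor
                · rintro ⟨⟨h1, h2⟩, (rfl | rfl | rfl)⟩
                  · rfl
                  · exact absurd h2 hyb
                  · exact absurd ((hzleb b.val).1 h2).2 hyb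
                · rintro rfl
                  exact ⟨⟨hax, hxb⟩, Or.inl rfl⟩
              rw [hint, finsum_mem_singleton]
              ring
          · by_cases hyb : y ≤ b.val
            · have hint : {c : α | a.val ≤ c ∧ c ≤ b.val} ∩ {x, y, z} = {y} := by
                ext c
                constructor
                · rintro ⟨⟨h1, h2⟩, (rfl | rfl | rfl)⟩
                  · exact absurd h2 hxb
                  · rfl
                  · exact absurd ((hzleb b.val).1 h2).1 hxb
                · rintro rfl
                  exact ⟨⟨hay, hyb⟩, Or.inr (Or.inl rfl)⟩
              rw [hint, finsum_mem_singleton, hrky]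
              ring
            · rcases hor with h | h
              · exact absurd h hxb
              · exact absurd h hyb
        · -- xy is not in the interval, neither are x, y, z
          have hxU : x ∉ {c : α | a.val ≤ c ∧ c ≤ b.val} :=
            fun h => hcond ⟨h.1, Or.inl h.2⟩
          have hyU : y ∉ {c : α | a.val ≤ c ∧ c ≤ b.val} :=
            fun h => hcond ⟨hleyx a.2.2.1 h.1, Or.inr h.2⟩
          have hzU : z ∉ {c : α | a.val ≤ c ∧ c ≤ b.val} :=
            fun h => hcond ⟨hlez a.2.1 a.2.2.1 a.2.2.2 h.1, Or.inl (hxcov.le.trans h.2)⟩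
          have himage : zipEmb x y z '' {C | r (Sum.inl a) C ∧ r C (Sum.inl b)}
              = {c : α | a.val ≤ c ∧ c ≤ b.val} := by
            ext c
            constructor
            · rintro ⟨(d | w), ⟨h1, h2⟩, rfl⟩
              · exact ⟨h1, h2⟩
              · exact absurd ⟨h1, h2⟩ hcond
            · intro hc
              refine ⟨Sum.inl ⟨c, ?_, ?_, ?_⟩, ⟨hc.1, hc.2⟩, rfl⟩
              · exact fun h => hxU (h ▸ hc)
              · exact fun h => hyU (h ▸ hc)
              · exact fun h => hzU (h ▸ hc)
          rw [himage, Esum a.val b.val hab]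
          refine if_congr ?_ rfl rfl
          constructor
          · intro h; exact congrArg Sum.inl (Subtype.ext h)
          · intro h; exact congrArg (zipEmb x y z) h
      · -- inl / inr
        cases v
        have hax : a.val ≤ x := hAB
        have himage : zipEmb x y z '' {C | r (Sum.inl a) C ∧ r C (Sum.inr ())}
            = ({c : α | a.val ≤ c ∧ c ≤ x} \ {x, y, z}) ∪ {x} := by
          ext c
          constructor
          · rintro ⟨(d | w), ⟨h1, h2⟩, rfl⟩
            · refine Or.inl ⟨⟨h1, h2⟩, ?_⟩
              rintro (h | h | h)
              · exact d.2.1 h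
              · exact d.2.2.1 h
              · exact d.2.2.2 h
            · exact Or.inr rfl
          · rintro (⟨⟨h1, h2⟩, hne⟩ | hc)
            · refine ⟨Sum.inl ⟨c, ?_, ?_, ?_⟩, ⟨h1, h2⟩, rfl⟩
              · exact fun h => hne (Or.inl h)
              · exact fun h => hne (Or.inr (Or.inl h))
              · exact fun h => hne (Or.inr (Or.inr h))
            · rw [Set.mem_singleton_iff] at hc
              subst hc
              exact ⟨Sum.inr (), ⟨hax, trivial⟩, rfl⟩
        have hint : {c : α | a.val ≤ c ∧ c ≤ x} ∩ {x, y, z} = {x} := by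
          ext c
          constructor
          · rintro ⟨⟨h1, h2⟩, (rfl | rfl | rfl)⟩
            · rfl
            · exact absurd h2 hylex
            · exact absurd h2 (fun h => lt_irrefl _ (lt_of_lt_of_le hxcov.lt h))
          · rintro rfl
            exact ⟨⟨hax, le_rfl⟩, Or.inl rfl⟩
        have hdisj : Disjoint ({c : α | a.val ≤ c ∧ c ≤ x} \ {x, y, z}) ({x} : Set α) :=
          Set.disjoint_singleton_right.2 (fun h => h.2 (Or.inl rfl))
        rw [himage, finsum_mem_union hdisj (Set.toFinite _) (Set.toFinite _),
          finsum_mem_singleton, zip_finsum_mem_diff, hint, finsum_mem_singleton,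
          Esum a.val x hax, if_neg a.2.1]
        erw [if_neg (show ¬((Sum.inl a : ZipCarrier α x y z) = Sum.inr ()) from Sum.inl_ne_inr)]
        ring
    · cases u
      rcases B with b | v
      · -- inr / inl
        have hor : x ≤ b.val ∨ y ≤ b.val := hAB
        have himage : zipEmb x y z '' {C | r (Sum.inr ()) C ∧ r C (Sum.inl b)}
            = ({c : α | (x ≤ c ∨ y ≤ c) ∧ c ≤ b.val} \ {x, y, z}) ∪ {x} := by
          ext c
          constructor
          · rintro ⟨(d | w), ⟨h1, h2⟩, rfl⟩
            · refine Or.inl ⟨⟨h1, h2⟩, ?_⟩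
              rintro (h | h | h)
              · exact d.2.1 h
              · exact d.2.2.1 h
              · exact d.2.2.2 h
            · exact Or.inr rfl
          · rintro (⟨⟨h1, h2⟩, hne⟩ | hc)
            · refine ⟨Sum.inl ⟨c, ?_, ?_, ?_⟩, ⟨h1, h2⟩, rfl⟩
              · exact fun h => hne (Or.inl h)
              · exact fun h => hne (Or.inr (Or.inl h))
              · exact fun h => hne (Or.inr (Or.inr h))
            · rw [Set.mem_singleton_iff] at hc
              subst hc
              exact ⟨Sum.inr (), ⟨trivial, hor⟩, rfl⟩
        have hdisj : Disjoint ({c : α | (x ≤ c ∨ y ≤ c) ∧ c ≤ b.val} \ {x, y, z})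
            ({x} : Set α) :=
          Set.disjoint_singleton_right.2 (fun h => h.2 (Or.inl rfl))
        rw [himage, finsum_mem_union hdisj (Set.toFinite _) (Set.toFinite _),
          finsum_mem_singleton, zip_finsum_mem_diff]
        erw [if_neg (show ¬((Sum.inr () : ZipCarrier α x y z) = Sum.inl b) from Sum.inr_ne_inl)]
        by_cases hxb : x ≤ b.val
        · by_cases hyb : y ≤ b.val
          · have hzb : z ≤ b.val := (hzleb b.val).2 ⟨hxb, hyb⟩
            have hV : {c : α | (x ≤ c ∨ y ≤ c) ∧ c ≤ b.val}
                = {c : α | x ≤ c ∧ c ≤ b.val} ∪ {c : α | y ≤ c ∧ c ≤ b.val} := by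
              ext c; constructor
              · rintro ⟨h1 | h1, h2⟩
                · exact Or.inl ⟨h1, h2⟩
                · exact Or.inr ⟨h1, h2⟩
              · rintro (⟨h1, h2⟩ | ⟨h1, h2⟩)
                · exact ⟨Or.inl h1, h2⟩
                · exact ⟨Or.inr h1, h2⟩
            have hVint : {c : α | x ≤ c ∧ c ≤ b.val} ∩ {c : α | y ≤ c ∧ c ≤ b.val}
                = {c : α | z ≤ c ∧ c ≤ b.val} := by
              ext c; constructor
              · rintro ⟨⟨h1, h2⟩, ⟨h3, h4⟩⟩
                exact ⟨(hzleb c).2 ⟨h1, h3⟩, h2⟩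
              · rintro ⟨h1, h2⟩
                exact ⟨⟨hxcov.le.trans h1, h2⟩, ⟨hycov.le.trans h1, h2⟩⟩
            have hie : (∑ᶠ c ∈ ({c : α | x ≤ c ∧ c ≤ b.val} ∪ {c : α | y ≤ c ∧ c ≤ b.val}),
                  ((-1:ℤ))^(rk c))
                + (∑ᶠ c ∈ ({c : α | x ≤ c ∧ c ≤ b.val} ∩ {c : α | y ≤ c ∧ c ≤ b.val}),
                  ((-1:ℤ))^(rk c))
                = (∑ᶠ c ∈ {c : α | x ≤ c ∧ c ≤ b.val}, ((-1:ℤ))^(rk c))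
                + (∑ᶠ c ∈ {c : α | y ≤ c ∧ c ≤ b.val}, ((-1:ℤ))^(rk c)) :=
              finsum_mem_union_inter (Set.toFinite _) (Set.toFinite _)
            rw [hVint, Esum x b.val hxb, Esum y b.val hyb, Esum z b.val hzb,
              if_neg (show ¬(x = b.val) from fun h => b.2.1 h.symm),
              if_neg (show ¬(y = b.val) from fun h => b.2.2.1 h.symm),
              if_neg (show ¬(z = b.val) from fun h => b.2.2.2 h.symm)] at hie
            have hVsum : (∑ᶠ c ∈ {c : α | (x ≤ c ∨ y ≤ c) ∧ c ≤ b.val}, ((-1:ℤ))^(rk c))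
                = 0 := by
              rw [hV]; omega
            have hint : {c : α | (x ≤ c ∨ y ≤ c) ∧ c ≤ b.val} ∩ {x, y, z} = {x, y, z} := by
              refine Set.inter_eq_right.2 ?_
              rintro c (rfl | rfl | rfl)
              · exact ⟨Or.inl le_rfl, hxb⟩
              · exact ⟨Or.inr le_rfl, hyb⟩
              · exact ⟨Or.inl hxcov.le, hzb⟩
            rw [hVsum, hint, zip_finsum_mem_triple hxy hxz hyz, hrky, hrkz, pow_succ]
            ring
          · have hV : {c : α | (x ≤ c ∨ y ≤ c) ∧ c ≤ b.val}
                = {c : α | x ≤ c ∧ c ≤ b.val} := by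
              ext c; constructor
              · rintro ⟨h1 | h1, h2⟩
                · exact ⟨h1, h2⟩
                · exact absurd (h1.trans h2) hyb
              · rintro ⟨h1, h2⟩
                exact ⟨Or.inl h1, h2⟩
            have hint : {c : α | (x ≤ c ∨ y ≤ c) ∧ c ≤ b.val} ∩ {x, y, z} = {x} := by
              ext c; constructor
              · rintro ⟨⟨h1, h2⟩, (rfl | rfl | rfl)⟩
                · rfl
                · exact absurd h2 hyb
                · exact absurd ((hzleb b.val).1 h2).2 hyb
              · rintro rfl
                exact ⟨⟨Or.inl le_rfl, hxb⟩, Or.inl rfl⟩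
            rw [hint, hV, Esum x b.val hxb, if_neg (show ¬(x = b.val) from fun h => b.2.1 h.symm),
              finsum_mem_singleton]
            ring
        · by_cases hyb : y ≤ b.val
          · have hV : {c : α | (x ≤ c ∨ y ≤ c) ∧ c ≤ b.val}
                = {c : α | y ≤ c ∧ c ≤ b.val} := by
              ext c; constructor
              · rintro ⟨h1 | h1, h2⟩
                · exact absurd (h1.trans h2) hxb
                · exact ⟨h1, h2⟩
              · rintro ⟨h1, h2⟩
                exact ⟨Or.inr h1, h2⟩
            have hint : {c : α | (x ≤ c ∨ y ≤ c) ∧ c ≤ b.val} ∩ {x, y, z} = {y} := by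
              ext c; constructor
              · rintro ⟨⟨h1, h2⟩, (rfl | rfl | rfl)⟩
                · exact absurd h2 hxb
                · rfl
                · exact absurd ((hzleb b.val).1 h2).1 hxb
              · rintro rfl
                exact ⟨⟨Or.inr le_rfl, hyb⟩, Or.inr (Or.inl rfl)⟩
            rw [hint, hV, Esum y b.val hyb, if_neg (show ¬(y = b.val) from fun h => b.2.2.1 h.symm),
              finsum_mem_singleton, hrky]
            ring
          · rcases hor with h | h
            · exact absurd h hxb
            · exact absurd h hyb
      · -- inr / inr
        cases v
        have himage : zipEmb x y z '' {C | r (Sum.inr ()) C ∧ r C (Sum.inr ())}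
            = ({x} : Set α) := by
          ext c
          constructor
          · rintro ⟨(d | w), ⟨h1, h2⟩, rfl⟩
            · exfalso
              rcases h1 with h | h
              · exact d.2.1 (le_antisymm h2 h)
              · exact hylex (h.trans h2)
            · rfl
          · rintro rfl
            exact ⟨Sum.inr (), ⟨trivial, trivial⟩, rfl⟩
        rw [himage, finsum_mem_singleton]
        erw [if_pos rfl]
        rfl
  -- the candidate Möbius function
  have hν : IsMoebius r (fun A B => ((-1:ℤ))^(zr B) * ((-1:ℤ))^(zr A)) := by
    intro A B hAB
    show (∑ᶠ C ∈ {C | r A C ∧ r C B}, ((-1:ℤ))^(zr C) * ((-1:ℤ))^(zr A))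
      = if A = B then 1 else 0
    rw [zip_finsum_mem_mul_const, key A B hAB]
    split_ifs with h
    · exact zip_neg_one_pow_sq _
    · exact zero_mul _
  intro A B hAB
  rw [moebius_unique r hrefl htrans hanti hμ' hν A B hAB]
  have hle : zr A ≤ zr B := by
    rcases A with a | u
    · rcases B with b | v
      · exact zip_rk_mono rk hrkcov hAB
      · exact zip_rk_mono rk hrkcov (show a.val ≤ x from hAB)
    · cases u
      rcases B with b | v
      · rcases (show x ≤ b.val ∨ y ≤ b.val from hAB) with h | h
        · exact zip_rk_mono rk hrkcov h
        · show rk x ≤ rk b.val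
          rw [← hrky]
          exact zip_rk_mono rk hrkcov h
      · exact le_rfl
  exact (zip_neg_one_pow_sub hle).symm
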